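/- There exists L ∈ S₁ such that Q = L² if and only if Dᵢ = 0 for all i = 1, …, 6. ([VVe1], Theorem on μ-rank in three variables, part (a).) -/

import Mathlib

/-!
STATEMENT 0: Let S be the skew polynomial algebra on z₁, z₂, z₃ with relations
z_j z_i = μ_{ij} z_i z_j, and let
Q = a z₁² + b z₂² + c z₃² + 2d z₁z₂ + 2e z₁z₃ + 2f z₂z₃ ∈ S.
There exists L ∈ S₁ with Q = L² iff D_i = 0 for i = 1, …, 6.
-/

noncomputable section

/-- The defining relations of the skew polynomial algebra `S`:
`z_j z_i = μ_{ij} • (z_i z_j)` for all `i, j`. -/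
inductive SkewRel (k : Type*) [CommRing k] (n : ℕ) (μ : Fin n → Fin n → k) :
    FreeAlgebra k (Fin n) → FreeAlgebra k (Fin n) → Prop
  | rel (i j : Fin n) : SkewRel k n μ
      (FreeAlgebra.ι k j * FreeAlgebra.ι k i)
      (μ i j • (FreeAlgebra.ι k i * FreeAlgebra.ι k j))

/-- The skew polynomial algebra `S`, a quotient of the free algebra on `n`
generators by the two-sided ideal generated by the skew-commutation relations. -/
abbrev SkewAlg (k : Type*) [CommRing k] (n : ℕ) (μ : Fin n → Fin n → k) :=
  RingQuot (SkewRel k n μ)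

/-- The degree-one generators `z_i` of `S`. -/
def zgen (k : Type*) [CommRing k] (n : ℕ) (μ : Fin n → Fin n → k) (i : Fin n) :
    SkewAlg k n μ :=
  RingQuot.mkAlgHom k (SkewRel k n μ) (FreeAlgebra.ι k i)

namespace Stmt0Aux

variable {k : Type*} [CommRing k] {n : ℕ} (μ : Fin n → Fin n → k)

def lam (i : Fin n) (m : Fin n →₀ ℕ) : k := ∏ l ∈ Finset.Iio i, μ l i ^ m l

@[simp] lemma lam_zero (i : Fin n) : lam μ i 0 = 1 := by simp [lam]

lemma lam_add (i j : Fin n) (m : Fin n →₀ ℕ) :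
    lam μ j (m + Finsupp.single i 1) = lam μ j m * (if i < j then μ i j else 1) := by
  unfold lam
  simp only [Finsupp.add_apply, pow_add, Finset.prod_mul_distrib]
  congr 1
  simp only [Finsupp.single_apply, pow_ite, pow_one, pow_zero]
  rw [Finset.prod_ite_eq]
  simp [Finset.mem_Iio]

lemma lam_single (i j : Fin n) :
    lam μ j (Finsupp.single i 1) = (if i < j then μ i j else 1) := by
  simpa using lam_add μ i j 0

def Zop (i : Fin n) : ((Fin n →₀ ℕ) →₀ k) →ₗ[k] ((Fin n →₀ ℕ) →₀ k) :=
  Finsupp.lsum k fun m => lam μ i m • Finsupp.lsingle (m + Finsupp.single i 1)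

@[simp] lemma Zop_single (i : Fin n) (m : Fin n →₀ ℕ) (x : k) :
    Zop μ i (Finsupp.single m x) =
      Finsupp.single (m + Finsupp.single i 1) (lam μ i m * x) := by
  simp [Zop, Finsupp.smul_single, smul_eq_mul]

lemma Zop_rel (hμd : ∀ i, μ i i = 1) (hμi : ∀ i j, μ i j * μ j i = 1) (i j : Fin n) :
    Zop μ j * Zop μ i = μ i j • (Zop μ i * Zop μ j) := by
  apply Finsupp.lhom_ext
  intro m x
  simp only [Module.End.mul_apply, LinearMap.smul_apply, Zop_single, Finsupp.smul_single,
    smul_eq_mul]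
  rw [add_right_comm m (Finsupp.single i 1) (Finsupp.single j 1)]
  congr 1
  rw [lam_add, lam_add]
  rcases lt_trichotomy i j with h | h | h
  · simp [h, not_lt.2 h.le]
    ring
  · subst h
    simp [hμd i]
  · simp [h, not_lt.2 h.le]
    rw [show μ i j * (lam μ i m * μ j i * (lam μ j m * x)) =
      (μ i j * μ j i) * (lam μ j m * (lam μ i m * x)) by ring, hμi, one_mul]

variable (hμd : ∀ i, μ i i = 1) (hμi : ∀ i j, μ i j * μ j i = 1)

def phiA : SkewAlg k n μ →ₐ[k] Module.End k ((Fin n →₀ ℕ) →₀ k) :=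
  RingQuot.liftAlgHom k ⟨FreeAlgebra.lift k (Zop μ), by
    rintro x y ⟨i, j⟩
    simp only [map_mul, map_smul, FreeAlgebra.lift_ι_apply]
    exact Zop_rel μ hμd hμi i j⟩

@[simp] lemma phiA_z (i : Fin n) : phiA μ hμd hμi (zgen k n μ i) = Zop μ i := by
  rw [zgen, phiA, RingQuot.liftAlgHom_mkAlgHom_apply, FreeAlgebra.lift_ι_apply]

lemma zgen_rel (i j : Fin n) :
    zgen k n μ j * zgen k n μ i = μ i j • (zgen k n μ i * zgen k n μ j) := by
  have h := RingQuot.mkAlgHom_rel k (SkewRel.rel (k := k) (n := n) (μ := μ) i j)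
  simpa [map_mul, map_smul, zgen] using h


section Key
variable {k : Type*} [CommRing k] (μ : Fin 3 → Fin 3 → k)
lemma key (hμd : ∀ i, μ i i = 1) (hμi : ∀ i j, μ i j * μ j i = 1) (a b c d e f α β γ : k)
    (h : a • (zgen k 3 μ 0)^2 + b • (zgen k 3 μ 1)^2 + c • (zgen k 3 μ 2)^2 +
      (2*d) • (zgen k 3 μ 0 * zgen k 3 μ 1) + (2*e) • (zgen k 3 μ 0 * zgen k 3 μ 2) +
      (2*f) • (zgen k 3 μ 1 * zgen k 3 μ 2)
      = (α • zgen k 3 μ 0 + β • zgen k 3 μ 1 + γ • zgen k 3 μ 2)^2) :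
    a = α * α ∧ b = β * β ∧ c = γ * γ ∧ 2*d = α * β + μ 0 1 * (β * α) ∧
      2*e = α * γ + μ 0 2 * (γ * α) ∧ 2*f = β * γ + μ 1 2 * (γ * β) := by
  have h1 := congrArg (phiA μ hμd hμi) h
  simp only [map_add, map_smul, map_pow, map_mul, phiA_z] at h1
  have h2 := LinearMap.congr_fun h1 (Finsupp.single (0 : Fin 3 →₀ ℕ) (1:k))
  have lamf_00 : lam μ 0 (Finsupp.single 0 1) = 1 := by rw [lam_single]; norm_num [Fin.lt_def]
  have lamf_01 : lam μ 0 (Finsupp.single 1 1) = 1 := by rw [lam_single]; norm_num [Fin.lt_def]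
  have lamf_02 : lam μ 0 (Finsupp.single 2 1) = 1 := by rw [lam_single]; norm_num [Fin.lt_def]
  have lamf_10 : lam μ 1 (Finsupp.single 0 1) = μ 0 1 := by rw [lam_single]; norm_num [Fin.lt_def]
  have lamf_11 : lam μ 1 (Finsupp.single 1 1) = 1 := by rw [lam_single]; norm_num [Fin.lt_def]
  have lamf_12 : lam μ 1 (Finsupp.single 2 1) = 1 := by rw [lam_single]; norm_num [Fin.lt_def]
  have lamf_20 : lam μ 2 (Finsupp.single 0 1) = μ 0 2 := by rw [lam_single]; norm_num [Fin.lt_def]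
  have lamf_21 : lam μ 2 (Finsupp.single 1 1) = μ 1 2 := by rw [lam_single]; norm_num [Fin.lt_def]
  have lamf_22 : lam μ 2 (Finsupp.single 2 1) = 1 := by rw [lam_single]; norm_num [Fin.lt_def]
  simp only [pow_two, LinearMap.add_apply, LinearMap.smul_apply, Module.End.mul_apply,
    map_add, map_smul, Zop_single, lam_zero, lamf_00, lamf_01, lamf_02, lamf_10, lamf_11,
    lamf_12, lamf_20, lamf_21, lamf_22, zero_add, one_mul, mul_one,
    Finsupp.smul_single, smul_eq_mul] at h2
  have ne_00_11 : (Finsupp.single (0:Fin 3) (1:ℕ) + Finsupp.single 0 1) ≠ (Finsupp.single (1:Fin 3) (1:ℕ) + Finsupp.single 1 1) := by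
    intro hh; have := DFunLike.congr_fun hh 0; simp [Finsupp.single_apply] at this
  have ne_11_00 : (Finsupp.single (1:Fin 3) (1:ℕ) + Finsupp.single 1 1) ≠ (Finsupp.single (0:Fin 3) (1:ℕ) + Finsupp.single 0 1) := ne_00_11.symm
  have ne_00_22 : (Finsupp.single (0:Fin 3) (1:ℕ) + Finsupp.single 0 1) ≠ (Finsupp.single (2:Fin 3) (1:ℕ) + Finsupp.single 2 1) := by
    intro hh; have := DFunLike.congr_fun hh 0; simp [Finsupp.single_apply] at this
  have ne_22_00 : (Finsupp.single (2:Fin 3) (1:ℕ) + Finsupp.single 2 1) ≠ (Finsupp.single (0:Fin 3) (1:ℕ) + Finsupp.single 0 1) := ne_00_22.symm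
  have ne_00_10 : (Finsupp.single (0:Fin 3) (1:ℕ) + Finsupp.single 0 1) ≠ (Finsupp.single (1:Fin 3) (1:ℕ) + Finsupp.single 0 1) := by
    intro hh; have := DFunLike.congr_fun hh 0; simp [Finsupp.single_apply] at this
  have ne_10_00 : (Finsupp.single (1:Fin 3) (1:ℕ) + Finsupp.single 0 1) ≠ (Finsupp.single (0:Fin 3) (1:ℕ) + Finsupp.single 0 1) := ne_00_10.symm
  have ne_00_20 : (Finsupp.single (0:Fin 3) (1:ℕ) + Finsupp.single 0 1) ≠ (Finsupp.single (2:Fin 3) (1:ℕ) + Finsupp.single 0 1) := by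
    intro hh; have := DFunLike.congr_fun hh 0; simp [Finsupp.single_apply] at this
  have ne_20_00 : (Finsupp.single (2:Fin 3) (1:ℕ) + Finsupp.single 0 1) ≠ (Finsupp.single (0:Fin 3) (1:ℕ) + Finsupp.single 0 1) := ne_00_20.symm
  have ne_00_21 : (Finsupp.single (0:Fin 3) (1:ℕ) + Finsupp.single 0 1) ≠ (Finsupp.single (2:Fin 3) (1:ℕ) + Finsupp.single 1 1) := by
    intro hh; have := DFunLike.congr_fun hh 0; simp [Finsupp.single_apply] at this
  have ne_21_00 : (Finsupp.single (2:Fin 3) (1:ℕ) + Finsupp.single 1 1) ≠ (Finsupp.single (0:Fin 3) (1:ℕ) + Finsupp.single 0 1) := ne_00_21.symm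
  have ne_11_22 : (Finsupp.single (1:Fin 3) (1:ℕ) + Finsupp.single 1 1) ≠ (Finsupp.single (2:Fin 3) (1:ℕ) + Finsupp.single 2 1) := by
    intro hh; have := DFunLike.congr_fun hh 1; simp [Finsupp.single_apply] at this
  have ne_22_11 : (Finsupp.single (2:Fin 3) (1:ℕ) + Finsupp.single 2 1) ≠ (Finsupp.single (1:Fin 3) (1:ℕ) + Finsupp.single 1 1) := ne_11_22.symm
  have ne_11_10 : (Finsupp.single (1:Fin 3) (1:ℕ) + Finsupp.single 1 1) ≠ (Finsupp.single (1:Fin 3) (1:ℕ) + Finsupp.single 0 1) := by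
    intro hh; have := DFunLike.congr_fun hh 0; simp [Finsupp.single_apply] at this
  have ne_10_11 : (Finsupp.single (1:Fin 3) (1:ℕ) + Finsupp.single 0 1) ≠ (Finsupp.single (1:Fin 3) (1:ℕ) + Finsupp.single 1 1) := ne_11_10.symm
  have ne_11_20 : (Finsupp.single (1:Fin 3) (1:ℕ) + Finsupp.single 1 1) ≠ (Finsupp.single (2:Fin 3) (1:ℕ) + Finsupp.single 0 1) := by
    intro hh; have := DFunLike.congr_fun hh 0; simp [Finsupp.single_apply] at this
  have ne_20_11 : (Finsupp.single (2:Fin 3) (1:ℕ) + Finsupp.single 0 1) ≠ (Finsupp.single (1:Fin 3) (1:ℕ) + Finsupp.single 1 1) := ne_11_20.symm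
  have ne_11_21 : (Finsupp.single (1:Fin 3) (1:ℕ) + Finsupp.single 1 1) ≠ (Finsupp.single (2:Fin 3) (1:ℕ) + Finsupp.single 1 1) := by
    intro hh; have := DFunLike.congr_fun hh 1; simp [Finsupp.single_apply] at this
  have ne_21_11 : (Finsupp.single (2:Fin 3) (1:ℕ) + Finsupp.single 1 1) ≠ (Finsupp.single (1:Fin 3) (1:ℕ) + Finsupp.single 1 1) := ne_11_21.symm
  have ne_22_10 : (Finsupp.single (2:Fin 3) (1:ℕ) + Finsupp.single 2 1) ≠ (Finsupp.single (1:Fin 3) (1:ℕ) + Finsupp.single 0 1) := by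
    intro hh; have := DFunLike.congr_fun hh 0; simp [Finsupp.single_apply] at this
  have ne_10_22 : (Finsupp.single (1:Fin 3) (1:ℕ) + Finsupp.single 0 1) ≠ (Finsupp.single (2:Fin 3) (1:ℕ) + Finsupp.single 2 1) := ne_22_10.symm
  have ne_22_20 : (Finsupp.single (2:Fin 3) (1:ℕ) + Finsupp.single 2 1) ≠ (Finsupp.single (2:Fin 3) (1:ℕ) + Finsupp.single 0 1) := by
    intro hh; have := DFunLike.congr_fun hh 0; simp [Finsupp.single_apply] at this
  have ne_20_22 : (Finsupp.single (2:Fin 3) (1:ℕ) + Finsupp.single 0 1) ≠ (Finsupp.single (2:Fin 3) (1:ℕ) + Finsupp.single 2 1) := ne_22_20.symm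
  have ne_22_21 : (Finsupp.single (2:Fin 3) (1:ℕ) + Finsupp.single 2 1) ≠ (Finsupp.single (2:Fin 3) (1:ℕ) + Finsupp.single 1 1) := by
    intro hh; have := DFunLike.congr_fun hh 1; simp [Finsupp.single_apply] at this
  have ne_21_22 : (Finsupp.single (2:Fin 3) (1:ℕ) + Finsupp.single 1 1) ≠ (Finsupp.single (2:Fin 3) (1:ℕ) + Finsupp.single 2 1) := ne_22_21.symm
  have ne_10_20 : (Finsupp.single (1:Fin 3) (1:ℕ) + Finsupp.single 0 1) ≠ (Finsupp.single (2:Fin 3) (1:ℕ) + Finsupp.single 0 1) := by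
    intro hh; have := DFunLike.congr_fun hh 1; simp [Finsupp.single_apply] at this
  have ne_20_10 : (Finsupp.single (2:Fin 3) (1:ℕ) + Finsupp.single 0 1) ≠ (Finsupp.single (1:Fin 3) (1:ℕ) + Finsupp.single 0 1) := ne_10_20.symm
  have ne_10_21 : (Finsupp.single (1:Fin 3) (1:ℕ) + Finsupp.single 0 1) ≠ (Finsupp.single (2:Fin 3) (1:ℕ) + Finsupp.single 1 1) := by
    intro hh; have := DFunLike.congr_fun hh 0; simp [Finsupp.single_apply] at this
  have ne_21_10 : (Finsupp.single (2:Fin 3) (1:ℕ) + Finsupp.single 1 1) ≠ (Finsupp.single (1:Fin 3) (1:ℕ) + Finsupp.single 0 1) := ne_10_21.symm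
  have ne_20_21 : (Finsupp.single (2:Fin 3) (1:ℕ) + Finsupp.single 0 1) ≠ (Finsupp.single (2:Fin 3) (1:ℕ) + Finsupp.single 1 1) := by
    intro hh; have := DFunLike.congr_fun hh 0; simp [Finsupp.single_apply] at this
  have ne_21_20 : (Finsupp.single (2:Fin 3) (1:ℕ) + Finsupp.single 1 1) ≠ (Finsupp.single (2:Fin 3) (1:ℕ) + Finsupp.single 0 1) := ne_20_21.symm
  have comm_01 : (Finsupp.single (0:Fin 3) (1:ℕ) + Finsupp.single 1 1) = (Finsupp.single (1:Fin 3) (1:ℕ) + Finsupp.single 0 1) := add_comm _ _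
  have comm_02 : (Finsupp.single (0:Fin 3) (1:ℕ) + Finsupp.single 2 1) = (Finsupp.single (2:Fin 3) (1:ℕ) + Finsupp.single 0 1) := add_comm _ _
  have comm_12 : (Finsupp.single (1:Fin 3) (1:ℕ) + Finsupp.single 2 1) = (Finsupp.single (2:Fin 3) (1:ℕ) + Finsupp.single 1 1) := add_comm _ _
  have hA := DFunLike.congr_fun h2 (Finsupp.single (0:Fin 3) (1:ℕ) + Finsupp.single 0 1)
  have hB := DFunLike.congr_fun h2 (Finsupp.single (1:Fin 3) (1:ℕ) + Finsupp.single 1 1)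
  have hC := DFunLike.congr_fun h2 (Finsupp.single (2:Fin 3) (1:ℕ) + Finsupp.single 2 1)
  have hD := DFunLike.congr_fun h2 (Finsupp.single (1:Fin 3) (1:ℕ) + Finsupp.single 0 1)
  have hE := DFunLike.congr_fun h2 (Finsupp.single (2:Fin 3) (1:ℕ) + Finsupp.single 0 1)
  have hF := DFunLike.congr_fun h2 (Finsupp.single (2:Fin 3) (1:ℕ) + Finsupp.single 1 1)
  simp only [Finsupp.add_apply, Finsupp.single_apply, comm_01, comm_02, comm_12,
    ne_00_11, ne_11_00, ne_00_22, ne_22_00, ne_00_10, ne_10_00, ne_00_20, ne_20_00, ne_00_21, ne_21_00, ne_11_22, ne_22_11, ne_11_10, ne_10_11, ne_11_20, ne_20_11, ne_11_21, ne_21_11, ne_22_10, ne_10_22, ne_22_20, ne_20_22, ne_22_21, ne_21_22, ne_10_20, ne_20_10, ne_10_21, ne_21_10, ne_20_21, ne_21_20,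
    if_true, if_false, eq_self_iff_true, add_zero, zero_add] at hA hB hC hD hE hF
  exact ⟨hA, hB, hC, by linear_combination hD, by linear_combination hE, by linear_combination hF⟩

lemma key2 (a b c d e f α β γ : k)
    (h1 : a = α * α) (h2 : b = β * β) (h3 : c = γ * γ)
    (h4 : 2*d = α * β + μ 0 1 * (β * α))
    (h5 : 2*e = α * γ + μ 0 2 * (γ * α))
    (h6 : 2*f = β * γ + μ 1 2 * (γ * β)) :
    a • (zgen k 3 μ 0)^2 + b • (zgen k 3 μ 1)^2 + c • (zgen k 3 μ 2)^2 +
      (2*d) • (zgen k 3 μ 0 * zgen k 3 μ 1) + (2*e) • (zgen k 3 μ 0 * zgen k 3 μ 2) +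
      (2*f) • (zgen k 3 μ 1 * zgen k 3 μ 2)
      = (α • zgen k 3 μ 0 + β • zgen k 3 μ 1 + γ • zgen k 3 μ 2)^2 := by
  rw [h1, h2, h3, h4, h5, h6]
  simp only [pow_two, add_mul, mul_add, smul_mul_assoc, mul_smul_comm, smul_smul,
    zgen_rel μ 0 1, zgen_rel μ 0 2, zgen_rel μ 1 2]
  module

end Key

section Scalars
variable {k : Type*} [Field k] [IsAlgClosed k]

lemma sqrt_exists (x : k) : ∃ y : k, x = y * y := by
  obtain ⟨y, hy⟩ := IsAlgClosed.exists_pow_nat_eq x (n := 2) zero_lt_two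
  exact ⟨y, by linear_combination -hy⟩

lemma scD (hchar : (2:k) ≠ 0) (p q r a b c d e f α β γ : k)
    (h1 : a = α*α) (h2 : b = β*β) (h3 : c = γ*γ)
    (h4 : 2*d = (1+p)*(α*β)) (h5 : 2*e = (1+q)*(α*γ)) (h6 : 2*f = (1+r)*(β*γ)) :
    4*d^2 - (1+p)^2*(a*b) = 0 ∧ 4*e^2 - (1+q)^2*(a*c) = 0 ∧ 4*f^2 - (1+r)^2*(b*c) = 0 ∧
    2*(1+r)*(d*e) - (1+p)*(1+q)*(a*f) = 0 ∧ 2*(1+p)*(e*f) - (1+q)*(1+r)*(c*d) = 0 ∧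
    2*(1+q)*(d*f) - (1+p)*(1+r)*(b*e) = 0 := by
  have hd : d = (1+p)*(α*β)/2 := by field_simp; linear_combination h4
  have he : e = (1+q)*(α*γ)/2 := by field_simp; linear_combination h5
  have hf : f = (1+r)*(β*γ)/2 := by field_simp; linear_combination h6
  subst h1 h2 h3 hd he hf
  refine ⟨by field_simp; ring, by field_simp; ring, by field_simp; ring,
    by field_simp; ring, by field_simp; ring, by field_simp; ring⟩

lemma scE (hchar : (2:k) ≠ 0) (p q r a b c d e f : k)
    (D1 : 4*d^2 - (1+p)^2*(a*b) = 0) (D2 : 4*e^2 - (1+q)^2*(a*c) = 0)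
    (D3 : 4*f^2 - (1+r)^2*(b*c) = 0)
    (D4 : 2*(1+r)*(d*e) - (1+p)*(1+q)*(a*f) = 0) :
    ∃ α β γ : k, a = α*α ∧ b = β*β ∧ c = γ*γ ∧
      2*d = (1+p)*(α*β) ∧ 2*e = (1+q)*(α*γ) ∧ 2*f = (1+r)*(β*γ) := by
  obtain ⟨α, hα⟩ := sqrt_exists a
  by_cases hPa : (1+p)*α = 0
  · have hd : d = 0 := by
      have h : (2*d)*(2*d) = ((1+p)*α)*((1+p)*α) * b := by linear_combination D1 + (1+p)^2*b*hα
      rw [hPa, zero_mul, zero_mul] at h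
      rcases mul_eq_zero.mp h with h' | h' <;> simpa [hchar] using mul_eq_zero.mp h'
    by_cases hQa : (1+q)*α = 0
    · have he : e = 0 := by
        have h : (2*e)*(2*e) = ((1+q)*α)*((1+q)*α) * c := by linear_combination D2 + (1+q)^2*c*hα
        rw [hQa, zero_mul, zero_mul] at h
        rcases mul_eq_zero.mp h with h' | h' <;> simpa [hchar] using mul_eq_zero.mp h'
      obtain ⟨β, hβ⟩ := sqrt_exists b
      obtain ⟨γ, hγ⟩ := sqrt_exists c
      have hsq : ((1+r)*(β*γ))*((1+r)*(β*γ)) = (2*f)*(2*f) := by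
        linear_combination -D3 - (1+r)^2*(γ*γ)*hβ - (1+r)^2*b*hγ
      rcases mul_self_eq_mul_self_iff.mp hsq with hcs | hcs
      · exact ⟨α, β, γ, hα, hβ, hγ, by rw [hd]; linear_combination -β*hPa,
          by rw [he]; linear_combination -γ*hQa, hcs.symm⟩
      · exact ⟨α, β, -γ, hα, hβ, by linear_combination hγ,
          by rw [hd]; linear_combination -β*hPa,
          by rw [he]; linear_combination γ*hQa, by linear_combination hcs⟩
    · have hγ : c = (2*e/((1+q)*α))*(2*e/((1+q)*α)) := by
        field_simp [(mul_ne_zero_iff.mp hQa).1, (mul_ne_zero_iff.mp hQa).2]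
        linear_combination -D2 - (1+q)^2*c*hα
      have hge : 2*e = (1+q)*(α*(2*e/((1+q)*α))) := by field_simp [(mul_ne_zero_iff.mp hQa).1, (mul_ne_zero_iff.mp hQa).2]
      obtain ⟨β, hβ⟩ := sqrt_exists b
      have hsq : ((1+r)*(β*(2*e/((1+q)*α))))*((1+r)*(β*(2*e/((1+q)*α)))) = (2*f)*(2*f) := by
        linear_combination -D3 - (1+r)^2*((2*e/((1+q)*α))*(2*e/((1+q)*α)))*hβ - (1+r)^2*b*hγ
      rcases mul_self_eq_mul_self_iff.mp hsq with hcs | hcs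
      · exact ⟨α, β, 2*e/((1+q)*α), hα, hβ, hγ, by rw [hd]; linear_combination -β*hPa,
          hge, hcs.symm⟩
      · exact ⟨α, -β, 2*e/((1+q)*α), hα, by linear_combination hβ, hγ,
          by rw [hd]; linear_combination β*hPa, hge, by linear_combination hcs⟩
  · have hβ : b = (2*d/((1+p)*α))*(2*d/((1+p)*α)) := by
      field_simp [(mul_ne_zero_iff.mp hPa).1, (mul_ne_zero_iff.mp hPa).2]
      linear_combination -D1 - (1+p)^2*b*hα
    have hgd : 2*d = (1+p)*(α*(2*d/((1+p)*α))) := by field_simp [(mul_ne_zero_iff.mp hPa).1, (mul_ne_zero_iff.mp hPa).2]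
    by_cases hQa : (1+q)*α = 0
    · have he : e = 0 := by
        have h : (2*e)*(2*e) = ((1+q)*α)*((1+q)*α) * c := by linear_combination D2 + (1+q)^2*c*hα
        rw [hQa, zero_mul, zero_mul] at h
        rcases mul_eq_zero.mp h with h' | h' <;> simpa [hchar] using mul_eq_zero.mp h'
      obtain ⟨γ, hγ⟩ := sqrt_exists c
      have hsq : ((1+r)*((2*d/((1+p)*α))*γ))*((1+r)*((2*d/((1+p)*α))*γ)) = (2*f)*(2*f) := by
        linear_combination -D3 - (1+r)^2*(γ*γ)*hβ - (1+r)^2*b*hγ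
      rcases mul_self_eq_mul_self_iff.mp hsq with hcs | hcs
      · exact ⟨α, 2*d/((1+p)*α), γ, hα, hβ, hγ, hgd,
          by rw [he]; linear_combination -γ*hQa, hcs.symm⟩
      · exact ⟨α, 2*d/((1+p)*α), -γ, hα, hβ, by linear_combination hγ, hgd,
          by rw [he]; linear_combination γ*hQa, by linear_combination hcs⟩
    · have hγ : c = (2*e/((1+q)*α))*(2*e/((1+q)*α)) := by
        field_simp [(mul_ne_zero_iff.mp hQa).1, (mul_ne_zero_iff.mp hQa).2]
        linear_combination -D2 - (1+q)^2*c*hα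
      have hge : 2*e = (1+q)*(α*(2*e/((1+q)*α))) := by field_simp [(mul_ne_zero_iff.mp hQa).1, (mul_ne_zero_iff.mp hQa).2]
      have hgf : 2*f = (1+r)*((2*d/((1+p)*α))*(2*e/((1+q)*α))) := by
        field_simp [(mul_ne_zero_iff.mp hPa).1, (mul_ne_zero_iff.mp hPa).2, (mul_ne_zero_iff.mp hQa).1, (mul_ne_zero_iff.mp hQa).2]
        linear_combination -D4 - (1+p)*(1+q)*f*hα
      exact ⟨α, 2*d/((1+p)*α), 2*e/((1+q)*α), hα, hβ, hγ, hgd, hge, hgf⟩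

end Scalars

end Stmt0Aux

theorem stmt0 (k : Type*) [Field k] [IsAlgClosed k] (hchar : (2 : k) ≠ 0)
    (μ : Fin 3 → Fin 3 → k)
    (hμ0 : ∀ i j, μ i j ≠ 0)
    (hμd : ∀ i, μ i i = 1)
    (hμi : ∀ i j, μ i j * μ j i = 1)
    (a b c d e f : k)
    (z : Fin 3 → SkewAlg k 3 μ) (hz : z = zgen k 3 μ)
    (Q : SkewAlg k 3 μ)
    (hQ : Q = a • (z 0) ^ 2 + b • (z 1) ^ 2 + c • (z 2) ^ 2 +
      (2 * d) • (z 0 * z 1) + (2 * e) • (z 0 * z 2) + (2 * f) • (z 1 * z 2)) :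
    (∃ L ∈ Submodule.span k (Set.range z), Q = L ^ 2) ↔
      (4 * d ^ 2 - (1 + μ 0 1) ^ 2 * (a * b) = 0 ∧
       4 * e ^ 2 - (1 + μ 0 2) ^ 2 * (a * c) = 0 ∧
       4 * f ^ 2 - (1 + μ 1 2) ^ 2 * (b * c) = 0 ∧
       2 * (1 + μ 1 2) * (d * e) - (1 + μ 0 1) * (1 + μ 0 2) * (a * f) = 0 ∧
       2 * (1 + μ 0 1) * (e * f) - (1 + μ 0 2) * (1 + μ 1 2) * (c * d) = 0 ∧
       2 * (1 + μ 0 2) * (d * f) - (1 + μ 0 1) * (1 + μ 1 2) * (b * e) = 0) := by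
  subst hz
  subst hQ
  constructor
  · rintro ⟨L, hL, hQL⟩
    rw [Submodule.mem_span_range_iff_exists_fun] at hL
    obtain ⟨cc, hcc⟩ := hL
    rw [← hcc, Fin.sum_univ_three] at hQL
    obtain ⟨h1, h2, h3, h4, h5, h6⟩ := Stmt0Aux.key μ hμd hμi a b c d e f
      (cc 0) (cc 1) (cc 2) hQL
    exact Stmt0Aux.scD hchar (μ 0 1) (μ 0 2) (μ 1 2) a b c d e f (cc 0) (cc 1) (cc 2)
      h1 h2 h3 (by linear_combination h4) (by linear_combination h5)
      (by linear_combination h6)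
  · rintro ⟨D1, D2, D3, D4, D5, D6⟩
    obtain ⟨α, β, γ, h1, h2, h3, h4, h5, h6⟩ :=
      Stmt0Aux.scE hchar (μ 0 1) (μ 0 2) (μ 1 2) a b c d e f D1 D2 D3 D4
    refine ⟨α • zgen k 3 μ 0 + β • zgen k 3 μ 1 + γ • zgen k 3 μ 2, ?_, ?_⟩
    · exact Submodule.add_mem _ (Submodule.add_mem _
        (Submodule.smul_mem _ _ (Submodule.subset_span ⟨0, rfl⟩))
        (Submodule.smul_mem _ _ (Submodule.subset_span ⟨1, rfl⟩)))
        (Submodule.smul_mem _ _ (Submodule.subset_span ⟨2, rfl⟩))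
    · exact Stmt0Aux.key2 μ a b c d e f α β γ h1 h2 h3
        (by linear_combination h4) (by linear_combination h5) (by linear_combination h6)


end
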